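/- arXiv:2303.00432 — 6 statements merged into one kernel-verified Lean document; each statement's English description precedes it below -/
import Mathlib

section
/- The relation on mixed-dimensional real vectors defined by x ↔ y iff there exist all-ones vectors 1_α and 1_β with x ⊗ 1_α = y ⊗ 1_β (Kronecker product) is an equivalence relation. -/
open Matrix

noncomputable section

/-- All-ones vector in `ℝ^k`. -/
def ones (k : ℕ) : Fin k → ℝ := fun _ => 1

/-- Kronecker product of two vectors (column vectors). -/
def vkron {m k : ℕ} (x : Fin m → ℝ) (y : Fin k → ℝ) : Fin (m * k) → ℝ :=
  fun i => x (finProdFinEquiv.symm i).1 * y (finProdFinEquiv.symm i).2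

/-- `J_k`: the `k × k` matrix all of whose entries are `1/k`. -/
def Jmat (k : ℕ) : Matrix (Fin k) (Fin k) ℝ := Matrix.of fun _ _ => (k : ℝ)⁻¹

/-- Kronecker product of matrices. -/
def mkron {m n p q : ℕ} (A : Matrix (Fin m) (Fin n) ℝ) (B : Matrix (Fin p) (Fin q) ℝ) :
    Matrix (Fin (m * p)) (Fin (n * q)) ℝ :=
  Matrix.of fun i j =>
    A (finProdFinEquiv.symm i).1 (finProdFinEquiv.symm j).1 *
    B (finProdFinEquiv.symm i).2 (finProdFinEquiv.symm j).2

/-- Mixed-dimensional vectors. -/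
def MVec := Σ n : ℕ, Fin n → ℝ

/-- Vector equivalence: `x ↔ y` iff `x ⊗ 1_α = y ⊗ 1_β` for some `α, β ≥ 1`. -/
def vequiv (x y : MVec) : Prop :=
  ∃ α β : ℕ, 0 < α ∧ 0 < β ∧ ∃ h : x.1 * α = y.1 * β,
    ∀ i, vkron x.2 (ones α) i = vkron y.2 (ones β) (Fin.cast h i)


lemma vkron_ones {m α : ℕ} (x : Fin m → ℝ) (i : Fin (m * α)) :
    vkron x (ones α) i = x i.divNat := by
  simp [vkron, ones]

/-- the relation `↔` on mixed-dimensional real vectors is an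
equivalence relation. -/
theorem vequiv_equivalence : Equivalence vequiv := by
  constructor
  · intro x
    exact ⟨1, 1, one_pos, one_pos, rfl, fun i => rfl⟩
  · rintro x y ⟨α, β, hα, hβ, h, H⟩
    exact ⟨β, α, hβ, hα, h.symm, fun i => (H (Fin.cast h.symm i)).symm⟩
  · rintro x y z ⟨α, β, hα, hβ, h1, H1⟩ ⟨γ, δ, hγ, hδ, h2, H2⟩
    have hdim : x.1 * (α * γ) = z.1 * (δ * β) := by
      calc x.1 * (α * γ) = x.1 * α * γ := (mul_assoc _ _ _).symm
        _ = y.1 * β * γ := by rw [h1]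
        _ = y.1 * γ * β := by ring
        _ = z.1 * δ * β := by rw [h2]
        _ = z.1 * (δ * β) := mul_assoc _ _ _
    refine ⟨α * γ, δ * β, Nat.mul_pos hα hγ, Nat.mul_pos hδ hβ, hdim, fun i => ?_⟩
    rw [vkron_ones, vkron_ones]
    have hj1 : i.val / γ < x.1 * α := by
      apply Nat.div_lt_of_lt_mul
      have e : γ * (x.1 * α) = x.1 * (α * γ) := by ring
      rw [e]; exact i.2
    have hj2 : i.val / β < y.1 * γ := by
      apply Nat.div_lt_of_lt_mul
      have e : x.1 * (α * γ) = β * (y.1 * γ) := by rw [← mul_assoc, h1]; ring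
      exact e ▸ i.2
    set j1 : Fin (x.1 * α) := ⟨i.val / γ, hj1⟩
    set j2 : Fin (y.1 * γ) := ⟨i.val / β, hj2⟩
    have e1 := H1 j1
    have e2 := H2 j2
    rw [vkron_ones, vkron_ones] at e1 e2
    have k1 : i.divNat = j1.divNat := by
      apply Fin.ext
      simp [j1, Fin.coe_divNat, Nat.div_div_eq_div_mul, Nat.mul_comm α γ]
    have k2 : (Fin.cast h1 j1).divNat = j2.divNat := by
      apply Fin.ext
      simp [j1, j2, Fin.coe_divNat, Nat.div_div_eq_div_mul, Nat.mul_comm β γ]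
    have k3 : (Fin.cast h2 j2).divNat = (Fin.cast hdim i).divNat := by
      apply Fin.ext
      simp [j2, Fin.coe_divNat, Nat.div_div_eq_div_mul, Nat.mul_comm β δ]
    rw [k1, e1, k2, e2, k3]
end
end

section
/- Every equivalence class under the vector equivalence ↔ contains a unique irreducible element x₁, and every element of the class has the form x₁ ⊗ 1_s for some s ≥ 1. -/
open Matrix

noncomputable section

/-- A mixed-dimensional vector is irreducible if it is not of the form
`y ⊗ 1_s` with `s > 1`. -/
def IrreducibleVec (x : MVec) : Prop :=
  ¬ ∃ (k s : ℕ) (y : Fin k → ℝ), 1 < s ∧ x = ⟨k * s, vkron y (ones s)⟩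

lemma vkron_ones_s2 {k s : ℕ} (y : Fin k → ℝ) (i : Fin (k * s)) :
    vkron y (ones s) i = y (Fin.divNat i) := by
  simp [vkron, ones]

lemma mvec_ext {n m : ℕ} (h : n = m) (v : Fin n → ℝ) (w : Fin m → ℝ)
    (hv : ∀ i, v i = w (Fin.cast h i)) : (⟨n, v⟩ : MVec) = ⟨m, w⟩ := by
  subst h; simp only [Fin.cast_refl] at hv ⊢
  congr 1; funext i; exact hv i

lemma mvec_inj {n m : ℕ} {v : Fin n → ℝ} {w : Fin m → ℝ}
    (h : (⟨n, v⟩ : MVec) = ⟨m, w⟩) : ∃ e : n = m, ∀ i, v i = w (Fin.cast e i) := by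
  obtain ⟨e, he⟩ := Sigma.mk.inj_iff.mp h
  subst e
  refine ⟨rfl, fun i => ?_⟩
  rw [eq_of_heq he]; rfl

def repM (s : ℕ) (p : MVec) : MVec := ⟨p.1 * s, vkron p.2 (ones s)⟩

lemma repM_one (p : MVec) : repM 1 p = p := by
  obtain ⟨n, v⟩ := p
  show (⟨n * 1, vkron v (ones 1)⟩ : MVec) = ⟨n, v⟩
  refine mvec_ext (Nat.mul_one n) _ _ (fun i => ?_)
  rw [vkron_ones_s2]; congr 1; apply Fin.ext; simp [Fin.coe_divNat]

lemma repM_repM (s t : ℕ) (p : MVec) : repM t (repM s p) = repM (s * t) p := by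
  obtain ⟨n, v⟩ := p
  refine mvec_ext (Nat.mul_assoc n s t) _ _ (fun i => ?_)
  rw [show (repM s ⟨n, v⟩).2 = vkron v (ones s) from rfl, vkron_ones_s2]
  show vkron (m := n * s) (vkron v (ones s)) (ones t) i = _
  rw [vkron_ones_s2, vkron_ones_s2]
  congr 1
  apply Fin.ext
  simp [Fin.coe_divNat, Nat.div_div_eq_div_mul, Nat.mul_comm t s]

lemma repM_cancel {s : ℕ} (hs : 0 < s) {p q : MVec} (h : repM s p = repM s q) : p = q := by
  obtain ⟨a, u⟩ := p
  obtain ⟨b, w⟩ := q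
  obtain ⟨e, he⟩ := mvec_inj h
  have hab : a = b := Nat.eq_of_mul_eq_mul_right hs e
  subst hab
  refine mvec_ext rfl _ _ (fun j => ?_)
  have hj : (j : ℕ) * s < a * s := (Nat.mul_lt_mul_right hs).mpr j.2
  have h2 := he ⟨(j : ℕ) * s, hj⟩
  rw [vkron_ones_s2, vkron_ones_s2] at h2
  have e1 : Fin.divNat (⟨(j : ℕ) * s, hj⟩ : Fin (a * s)) = j := by
    apply Fin.ext; simp [Fin.coe_divNat, Nat.mul_div_cancel _ hs]
  have e2 : Fin.divNat (Fin.cast e (⟨(j : ℕ) * s, hj⟩ : Fin (a * s))) = j := by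
    apply Fin.ext; simp [Fin.coe_divNat, Nat.mul_div_cancel _ hs]
  rw [e1, e2] at h2
  simpa using h2

def Blk (s : ℕ) (x : MVec) : Prop := ∃ p : MVec, x = repM s p

lemma blk_iff {s n : ℕ} (hs : 0 < s) (v : Fin n → ℝ) :
    Blk s ⟨n, v⟩ ↔ s ∣ n ∧ ∀ i j : Fin n, (i : ℕ) / s = (j : ℕ) / s → v i = v j := by
  constructor
  · rintro ⟨⟨k, y⟩, h⟩
    obtain ⟨e, he⟩ := mvec_inj h
    refine ⟨⟨k, by rw [e, Nat.mul_comm]⟩, fun i j hij => ?_⟩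
    rw [he i, he j]
    show vkron y (ones s) _ = vkron y (ones s) _
    rw [vkron_ones_s2, vkron_ones_s2]
    congr 1
    apply Fin.ext
    simp [Fin.coe_divNat, hij]
  · rintro ⟨⟨k, hk⟩, hcon⟩
    have hks : n = k * s := by rw [hk, Nat.mul_comm]
    refine ⟨(⟨k, fun j => v ⟨(j : ℕ) * s, by rw [hks]; exact (Nat.mul_lt_mul_right hs).mpr j.2⟩⟩ : MVec), ?_⟩
    refine mvec_ext hks _ _ (fun i => ?_)
    show v i = vkron _ (ones s) _
    rw [vkron_ones_s2]
    apply hcon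
    simp [Fin.coe_divNat, Nat.mul_div_cancel _ hs]

lemma blk_lcm_aux {n s t : ℕ} (hs : 0 < s) (ht : 0 < t) (v : Fin n → ℝ)
    (hcs : ∀ i j : Fin n, (i : ℕ) / s = (j : ℕ) / s → v i = v j)
    (hct : ∀ i j : Fin n, (i : ℕ) / t = (j : ℕ) / t → v i = v j) :
    ∀ i j : Fin n, (i : ℕ) / (Nat.lcm s t) = (j : ℕ) / (Nat.lcm s t) → v i = v j := by
  set L := Nat.lcm s t with hLdef
  have hL : 0 < L := Nat.pos_of_ne_zero (Nat.lcm_ne_zero hs.ne' ht.ne')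
  have step : ∀ m (hm : m + 1 < n), ¬ L ∣ (m + 1) →
      v ⟨m, Nat.lt_of_succ_lt hm⟩ = v ⟨m + 1, hm⟩ := by
    intro m hm hnd
    by_cases hsd : s ∣ (m + 1)
    · have htd : ¬ t ∣ (m + 1) := fun htd => hnd (Nat.lcm_dvd hsd htd)
      apply hct
      show m / t = (m + 1) / t
      rw [Nat.succ_div, if_neg htd, Nat.add_zero]
    · apply hcs
      show m / s = (m + 1) / s
      rw [Nat.succ_div, if_neg hsd, Nat.add_zero]
  have chain : ∀ d i (hi : i + d < n), (i + d) / L = i / L →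
      v ⟨i, lt_of_le_of_lt (Nat.le_add_right i d) hi⟩ = v ⟨i + d, hi⟩ := by
    intro d
    induction d with
    | zero => intro i hi _; rfl
    | succ d ih =>
      intro i hi hdiv
      have hi' : i + d < n := by omega
      have hle : i / L ≤ (i + d) / L := Nat.div_le_div_right (by omega)
      have hle2 : (i + d) / L ≤ (i + d + 1) / L := Nat.div_le_div_right (by omega)
      have hdiv1 : (i + d + 1) / L = i / L := hdiv
      have hdiv' : (i + d) / L = i / L := by omega
      have hnd : ¬ L ∣ (i + d + 1) := by
        rintro ⟨q, hq⟩
        have h1 : (i + d + 1) / L = q := by rw [hq]; exact Nat.mul_div_cancel_left q hL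
        have h2 : i / L < q := (Nat.div_lt_iff_lt_mul hL).mpr (by rw [Nat.mul_comm]; omega)
        omega
      exact (ih i hi' hdiv').trans (step (i + d) hi hnd)
  have aux : ∀ i j : Fin n, (i : ℕ) ≤ (j : ℕ) → (i : ℕ) / L = (j : ℕ) / L → v i = v j := by
    intro i j hij hdiv
    have hd : (i : ℕ) + ((j : ℕ) - (i : ℕ)) = (j : ℕ) := by omega
    have hjn : (i : ℕ) + ((j : ℕ) - (i : ℕ)) < n := by omega
    have := chain ((j : ℕ) - (i : ℕ)) (i : ℕ) hjn (by rw [hd]; exact hdiv.symm)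
    have e1 : (⟨(i : ℕ), _⟩ : Fin n) = i := rfl
    calc v i = v ⟨(i : ℕ), lt_of_le_of_lt (Nat.le_add_right _ _) hjn⟩ := by congr 1
      _ = v ⟨(i : ℕ) + ((j : ℕ) - (i : ℕ)), hjn⟩ := this
      _ = v j := by congr 1; apply Fin.ext; exact hd
  intro i j hdiv
  rcases le_total (i : ℕ) (j : ℕ) with h | h
  · exact aux i j h hdiv
  · exact (aux j i h hdiv.symm).symm

lemma blk_one (x : MVec) : Blk 1 x := ⟨x, (repM_one x).symm⟩

lemma blk_of_dvd {d s : ℕ} (hds : d ∣ s) {x : MVec} : Blk s x → Blk d x := by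
  rintro ⟨p, rfl⟩
  obtain ⟨e, rfl⟩ := hds
  exact ⟨repM e p, by rw [Nat.mul_comm d e]; exact (repM_repM e d p).symm⟩

lemma blk_dvd_len {s : ℕ} {x : MVec} : Blk s x → s ∣ x.1 := by
  rintro ⟨p, rfl⟩
  exact ⟨p.1, Nat.mul_comm _ _⟩

lemma blk_lcm {s t : ℕ} (hs : 0 < s) (ht : 0 < t) {x : MVec}
    (h1 : Blk s x) (h2 : Blk t x) : Blk (Nat.lcm s t) x := by
  obtain ⟨n, v⟩ := x
  have hL : 0 < Nat.lcm s t := Nat.pos_of_ne_zero (Nat.lcm_ne_zero hs.ne' ht.ne')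
  rw [blk_iff hs] at h1
  rw [blk_iff ht] at h2
  rw [blk_iff hL]
  exact ⟨Nat.lcm_dvd h1.1 h2.1, blk_lcm_aux hs ht v h1.2 h2.2⟩

lemma irr_iff (x : MVec) : IrreducibleVec x ↔ ∀ s, 1 < s → ¬ Blk s x := by
  constructor
  · rintro h s hs ⟨⟨k, y⟩, he⟩
    exact h ⟨k, s, y, hs, he⟩
  · rintro h ⟨k, s, y, hs, he⟩
    exact h s hs ⟨⟨k, y⟩, he⟩

lemma core_exists (x : MVec) (hx : 0 < x.1) :
    ∃ (p : MVec) (M : ℕ), 0 < M ∧ x = repM M p ∧ ∀ s, Blk s x → s ∣ M := by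
  classical
  set P : ℕ → Prop := fun s => Blk s x with hP
  let M := Nat.findGreatest P x.1
  have h1 : P 1 := blk_one x
  have hM1 : 1 ≤ M := Nat.le_findGreatest hx h1
  have hPM : P M := Nat.findGreatest_spec hx h1
  obtain ⟨p, hp⟩ := hPM
  refine ⟨p, M, hM1, hp, fun s hs => ?_⟩
  have hs0 : 0 < s := by
    rcases Nat.eq_zero_or_pos s with h | h
    · exfalso; subst h
      obtain ⟨q, hq⟩ := hs
      have : x.1 = q.1 * 0 := congrArg Sigma.fst hq
      omega
    · exact h
  have hblk : Blk (Nat.lcm s M) x := blk_lcm hs0 hM1 hs ⟨p, hp⟩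
  have hle : Nat.lcm s M ≤ x.1 := Nat.le_of_dvd hx (blk_dvd_len hblk)
  have hle2 : Nat.lcm s M ≤ M := Nat.le_findGreatest hle hblk
  have hge : M ≤ Nat.lcm s M := Nat.le_of_dvd
    (Nat.pos_of_ne_zero (Nat.lcm_ne_zero hs0.ne' (by omega))) (Nat.dvd_lcm_right s M)
  have heq : Nat.lcm s M = M := Nat.le_antisymm hle2 hge
  exact heq ▸ Nat.dvd_lcm_left s M

/-- every equivalence class (of a positive-dimensional vector)
contains a unique irreducible element `x₁`, and every member of the class is of
the form `x₁ ⊗ 1_s`. -/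
theorem exists_unique_irreducible (x : MVec) (hx : 0 < x.1) :
    ∃! x₁ : MVec, IrreducibleVec x₁ ∧ vequiv x₁ x ∧
      ∀ y : MVec, vequiv y x → ∃ s : ℕ, 0 < s ∧ y = ⟨x₁.1 * s, vkron x₁.2 (ones s)⟩ := by
  obtain ⟨p, M, hM, hp, hmax⟩ := core_exists x hx
  have hp1 : 0 < p.1 := by
    have hx1 : x.1 = p.1 * M := congrArg Sigma.fst hp
    rcases Nat.eq_zero_or_pos p.1 with h0 | h0
    · rw [h0, Nat.zero_mul] at hx1; omega
    · exact h0
  have hirr : IrreducibleVec p := by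
    rw [irr_iff]
    rintro t ht ⟨q, hq⟩
    have hb : Blk (t * M) x := ⟨q, by rw [hp, hq, repM_repM]⟩
    have hle : t * M ≤ M := Nat.le_of_dvd hM (hmax _ hb)
    have h2 : 2 * M ≤ t * M := Nat.mul_le_mul_right M ht
    omega
  have hmem : ∀ y : MVec, vequiv y x → ∃ s : ℕ, 0 < s ∧ y = repM s p := by
    rintro y ⟨α, β, hα, hβ, h, hvk⟩
    have hZ : repM α y = repM β x := mvec_ext h _ _ hvk
    have hZ1 : 0 < (repM α y).1 := by
      show 0 < y.1 * α
      rw [h]; exact Nat.mul_pos hx hβ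
    obtain ⟨q, M', hM', hq, hmax'⟩ := core_exists (repM α y) hZ1
    have hαM' : α ∣ M' := hmax' α ⟨y, rfl⟩
    have hMβ : Blk (M * β) (repM α y) := ⟨p, by rw [hZ, hp, repM_repM]⟩
    obtain ⟨c, hc⟩ := hαM'
    obtain ⟨d, hd⟩ := hmax' _ hMβ
    have hc0 : 0 < c := by
      rcases Nat.eq_zero_or_pos c with h0 | h0
      · rw [h0, Nat.mul_zero] at hc; omega
      · exact h0
    have hy : y = repM c q := by
      apply repM_cancel hα
      rw [hq, repM_repM c α q, hc, Nat.mul_comm α c]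
    have hpd : p = repM d q := by
      apply repM_cancel (Nat.mul_pos hM hβ)
      calc repM (M * β) p = repM β (repM M p) := (repM_repM M β p).symm
        _ = repM β x := by rw [← hp]
        _ = repM M' q := hZ.symm.trans hq
        _ = repM (d * (M * β)) q := by rw [hd, Nat.mul_comm]
        _ = repM (M * β) (repM d q) := (repM_repM d (M * β) q).symm
    have hd1 : d = 1 := by
      by_contra hne
      have hd0 : 0 < d := by
        rcases Nat.eq_zero_or_pos d with h0 | h0
        · rw [h0, Nat.mul_zero] at hd; omega
        · exact h0
      exact (irr_iff p).mp hirr d (by omega) ⟨q, hpd⟩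
    subst hd1
    rw [repM_one] at hpd
    exact ⟨c, hc0, by rw [hy, ← hpd]⟩
  have hveq : vequiv p x := by
    have h : p.1 * M = x.1 * 1 := by rw [Nat.mul_one]; exact (congrArg Sigma.fst hp).symm
    refine ⟨M, 1, hM, Nat.one_pos, h, fun i => ?_⟩
    obtain ⟨e, he⟩ := mvec_inj (show (⟨x.1, x.2⟩ : MVec) = repM M p from hp)
    show vkron p.2 (ones M) i = vkron x.2 (ones 1) (Fin.cast h i)
    rw [vkron_ones_s2, vkron_ones_s2, he, vkron_ones_s2]
    exact congrArg p.snd (Fin.ext (by simp [Fin.coe_divNat, Nat.div_one]))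
  refine ⟨p, ⟨hirr, hveq, fun y hy => ?_⟩, ?_⟩
  · obtain ⟨s, hs, he⟩ := hmem y hy
    exact ⟨s, hs, he⟩
  · rintro z ⟨hz_irr, hz_equiv, -⟩
    obtain ⟨s, hs, he⟩ := hmem z hz_equiv
    have hs1 : s = 1 := by
      by_contra hne
      exact (irr_iff z).mp hz_irr s (by omega) ⟨p, he⟩
    subst hs1
    rw [he, repM_one]
end
end

section
/- The cross-dimensional addition is well-defined on equivalence classes: if x ↔ x' and y ↔ y', then (x ⊕ y) ↔ (x' ⊕ y'), where x ⊕ y := (x ⊗ 1_{t/m}) + (y ⊗ 1_{t/n}) with t = lcm(m,n). -/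
open Matrix

noncomputable section

/-- Stretch a vector `x ∈ ℝ^m` to dimension `t` (meaningful when `m ∣ t`),
as `x ⊗ 1_{t/m}`. -/
def stretch {m : ℕ} (x : Fin m → ℝ) (t : ℕ) : Fin t → ℝ :=
  fun i => if h : m * (t / m) = t then vkron x (ones (t / m)) (Fin.cast h.symm i) else 0

/-- Cross-dimensional addition `x ⊕ y := (x ⊗ 1_{t/m}) + (y ⊗ 1_{t/n})`, `t = lcm(m,n)`. -/
def vaddc {m n : ℕ} (x : Fin m → ℝ) (y : Fin n → ℝ) : Fin (Nat.lcm m n) → ℝ :=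
  fun i => stretch x (Nat.lcm m n) i + stretch y (Nat.lcm m n) i

lemma vkron_ones_apply {m α : ℕ} (x : Fin m → ℝ) (i : Fin (m * α)) :
    vkron x (ones α) i = x ⟨i.val / α, by
      have hα : 0 < α := Nat.pos_of_ne_zero (by rintro rfl; exact absurd i.pos (by simp))
      exact (Nat.div_lt_iff_lt_mul hα).2 i.isLt⟩ := by
  simp [vkron, ones, finProdFinEquiv, Fin.divNat]

lemma stretch_apply {m t : ℕ} (hm : 0 < m) (hd : m ∣ t) (x : Fin m → ℝ) (i : Fin t) :
    stretch x t i = x ⟨i.val / (t / m), by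
      have ht : 0 < t := i.pos
      have h1 : 0 < t / m := Nat.div_pos (Nat.le_of_dvd ht hd) hm
      exact (Nat.div_lt_iff_lt_mul h1).2
        (by rw [Nat.mul_div_cancel' hd]; exact i.isLt)⟩ := by
  obtain ⟨k, rfl⟩ := hd
  have hk : m * k / m = k := Nat.mul_div_cancel_left _ hm
  have hc : m * (m * k / m) = m * k := by rw [hk]
  simp only [stretch, dif_pos hc]
  rw [vkron_ones_apply]
  congr 1

lemma stretch_stretch {m t T : ℕ} (hm : 0 < m) (ht : 0 < t) (hmt : m ∣ t) (htT : t ∣ T)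
    (x : Fin m → ℝ) (j : Fin T) : stretch (stretch x t) T j = stretch x T j := by
  rw [stretch_apply ht htT, stretch_apply hm hmt, stretch_apply hm (hmt.trans htT)]
  congr 1
  apply Fin.ext
  show j.val / (T / t) / (t / m) = j.val / (T / m)
  rw [Nat.div_div_eq_div_mul]
  congr 1
  rw [Nat.div_mul_div_comm htT hmt, Nat.mul_comm T t, Nat.mul_div_mul_left _ _ ht]

lemma stretch_add {m t : ℕ} (f g : Fin m → ℝ) (j : Fin t) :
    stretch (fun i => f i + g i) t j = stretch f t j + stretch g t j := by
  unfold stretch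
  split
  · simp [vkron, add_mul]
  · simp

lemma vequiv_elim {m m' : ℕ} (hm : 0 < m) (hm' : 0 < m') {x : Fin m → ℝ} {x' : Fin m' → ℝ}
    (h : vequiv ⟨m, x⟩ ⟨m', x'⟩) :
    ∃ N, 0 < N ∧ m ∣ N ∧ m' ∣ N ∧ ∀ j : Fin N, stretch x N j = stretch x' N j := by
  obtain ⟨α, β, hα, hβ, heq, he⟩ := h
  refine ⟨m * α, Nat.mul_pos hm hα, Dvd.intro _ rfl, heq ▸ Dvd.intro _ rfl, fun j => ?_⟩
  rw [stretch_apply hm (Dvd.intro _ rfl), stretch_apply hm' (heq ▸ Dvd.intro _ rfl)]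
  have h1 := he j
  rw [vkron_ones_apply, vkron_ones_apply] at h1
  have hdm : m * α / m = α := Nat.mul_div_cancel_left _ hm
  have hdm' : m * α / m' = β := by rw [heq]; exact Nat.mul_div_cancel_left _ hm'
  convert h1 using 2 <;> apply Fin.ext <;> simp [hdm, hdm', Fin.cast]

lemma vequiv_intro {m m' : ℕ} (hm : 0 < m) (hm' : 0 < m') {x : Fin m → ℝ} {x' : Fin m' → ℝ}
    (N : ℕ) (hN : 0 < N) (h1 : m ∣ N) (h2 : m' ∣ N)
    (he : ∀ j : Fin N, stretch x N j = stretch x' N j) : vequiv ⟨m, x⟩ ⟨m', x'⟩ := by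
  refine ⟨N / m, N / m', Nat.div_pos (Nat.le_of_dvd hN h1) hm,
    Nat.div_pos (Nat.le_of_dvd hN h2) hm', ?_, ?_⟩
  · show m * (N / m) = m' * (N / m')
    rw [Nat.mul_div_cancel' h1, Nat.mul_div_cancel' h2]
  · intro i
    have hNm : m * (N / m) = N := Nat.mul_div_cancel' h1
    have h1' := he (Fin.cast hNm i)
    rw [stretch_apply hm h1, stretch_apply hm' h2] at h1'
    rw [vkron_ones_apply, vkron_ones_apply]
    convert h1' using 2 <;> apply Fin.ext <;> simp [Fin.cast]

lemma stretch_vaddc {m n N : ℕ} (hm : 0 < m) (hn : 0 < n) (hL : Nat.lcm m n ∣ N)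
    (x : Fin m → ℝ) (y : Fin n → ℝ) (j : Fin N) :
    stretch (vaddc x y) N j = stretch x N j + stretch y N j := by
  have hLp : 0 < Nat.lcm m n := Nat.lcm_pos hm hn
  have h : stretch (vaddc x y) N j
      = stretch (stretch x (Nat.lcm m n)) N j + stretch (stretch y (Nat.lcm m n)) N j :=
    stretch_add _ _ j
  rw [h, stretch_stretch hm hLp (Nat.dvd_lcm_left m n) hL,
    stretch_stretch hn hLp (Nat.dvd_lcm_right m n) hL]

/-- cross-dimensional addition is well defined on equivalence
classes: if `x ↔ x'` and `y ↔ y'` then `(x ⊕ y) ↔ (x' ⊕ y')`. -/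
theorem vaddc_well_defined (m n m' n' : ℕ)
    (hm : 0 < m) (hn : 0 < n) (hm' : 0 < m') (hn' : 0 < n')
    (x : Fin m → ℝ) (y : Fin n → ℝ) (x' : Fin m' → ℝ) (y' : Fin n' → ℝ)
    (hx : vequiv ⟨m, x⟩ ⟨m', x'⟩) (hy : vequiv ⟨n, y⟩ ⟨n', y'⟩) :
    vequiv ⟨Nat.lcm m n, vaddc x y⟩ ⟨Nat.lcm m' n', vaddc x' y'⟩ := by
  obtain ⟨N₁, hN₁, hmN₁, hm'N₁, he₁⟩ := vequiv_elim hm hm' hx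
  obtain ⟨N₂, hN₂, hnN₂, hn'N₂, he₂⟩ := vequiv_elim hn hn' hy
  set N := Nat.lcm N₁ N₂ with hNdef
  have hN : 0 < N := Nat.lcm_pos hN₁ hN₂
  have hN₁N : N₁ ∣ N := Nat.dvd_lcm_left _ _
  have hN₂N : N₂ ∣ N := Nat.dvd_lcm_right _ _
  have hL : Nat.lcm m n ∣ N := Nat.lcm_dvd (hmN₁.trans hN₁N) (hnN₂.trans hN₂N)
  have hL' : Nat.lcm m' n' ∣ N := Nat.lcm_dvd (hm'N₁.trans hN₁N) (hn'N₂.trans hN₂N)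
  refine vequiv_intro (Nat.lcm_pos hm hn) (Nat.lcm_pos hm' hn') N hN hL hL' fun j => ?_
  rw [stretch_vaddc hm hn hL, stretch_vaddc hm' hn' hL']
  have hxx : stretch x N j = stretch x' N j := by
    have h1 : stretch x N j = stretch (stretch x N₁) N j :=
      (stretch_stretch hm hN₁ hmN₁ hN₁N x j).symm
    have h2 : stretch x' N j = stretch (stretch x' N₁) N j :=
      (stretch_stretch hm' hN₁ hm'N₁ hN₁N x' j).symm
    rw [h1, h2, funext he₁]
  have hyy : stretch y N j = stretch y' N j := by
    have h1 : stretch y N j = stretch (stretch y N₂) N j :=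
      (stretch_stretch hn hN₂ hnN₂ hN₂N y j).symm
    have h2 : stretch y' N j = stretch (stretch y' N₂) N j :=
      (stretch_stretch hn' hN₂ hn'N₂ hN₂N y' j).symm
    rw [h1, h2, funext he₂]
  rw [hxx, hyy]
end
end

section
/- The second semi-tensor product A ∘ B := (A ⊗ J_{t/n})(B ⊗ J_{t/p}), where A ∈ ℝ^{m×n}, B ∈ ℝ^{p×q} and t = lcm(n,p), is associative: (A ∘ B) ∘ C = A ∘ (B ∘ C) for all real matrices A, B, C. -/
open Matrix

noncomputable section

/-- The second semi-tensor product `A ∘ B := (A ⊗ J_{t/n})(B ⊗ J_{t/p})`, `t = lcm(n, p)`. -/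
def sstp {m n p q : ℕ} (A : Matrix (Fin m) (Fin n) ℝ) (B : Matrix (Fin p) (Fin q) ℝ) :
    Matrix (Fin (m * (Nat.lcm n p / n))) (Fin (q * (Nat.lcm n p / p))) ℝ :=
  if h : n * (Nat.lcm n p / n) = p * (Nat.lcm n p / p) then
    mkron A (Jmat (Nat.lcm n p / n)) *
      (mkron B (Jmat (Nat.lcm n p / p))).submatrix (Fin.cast h) id
  else 0

/-- Quotient component of an index. -/
def fdiv (n k : ℕ) {N : ℕ} (h : N = n * k) (s : Fin N) : Fin n :=
  ⟨s.val / k, by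
    have hk : 0 < k := by
      rcases Nat.eq_zero_or_pos k with h0 | h0
      · exfalso; rw [h0, Nat.mul_zero] at h; have := s.isLt; omega
      · exact h0
    exact (Nat.div_lt_iff_lt_mul hk).mpr (h ▸ s.isLt)⟩

@[simp] lemma fdiv_val (n k : ℕ) {N : ℕ} (h : N = n * k) (s : Fin N) :
    (fdiv n k h s).val = s.val / k := rfl

lemma fdiv_fdiv {N M n k1 k2 : ℕ} (h1 : M = n * k1) (h2 : N = M * k2) (s : Fin N) :
    fdiv n k1 h1 (fdiv M k2 h2 s) =
      fdiv n (k1 * k2) (by rw [h2, h1, Nat.mul_assoc]) s := by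
  apply Fin.ext
  simp [Nat.div_div_eq_div_mul, Nat.mul_comm k1 k2]

lemma sum_cast {M N : ℕ} (h : M = N) (g : Fin N → ℝ) :
    (∑ s : Fin M, g (Fin.cast h s)) = ∑ x : Fin N, g x := by
  subst h; rfl

lemma sum_fdiv {N k M : ℕ} (h : M = N * k) (hk : 0 < k) (g : Fin N → ℝ) :
    ∑ s : Fin M, g (fdiv N k h s) = (k : ℝ) * ∑ r : Fin N, g r := by
  subst h
  rw [← (finProdFinEquiv (m := N) (n := k)).sum_comp (fun s => g (fdiv N k rfl s))]
  have key : ∀ (a : Fin N) (b : Fin k), fdiv N k rfl (finProdFinEquiv (a, b)) = a := by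
    intro a b
    apply Fin.ext
    simp only [fdiv_val, finProdFinEquiv_apply_val]
    rw [Nat.add_mul_div_left _ _ hk, Nat.div_eq_of_lt b.isLt]
    simp
  rw [Fintype.sum_prod_type]
  simp only [key]
  simp only [Finset.sum_const, Finset.card_univ, Fintype.card_fin, nsmul_eq_mul]
  rw [Finset.mul_sum]

lemma sum_scale {N k M : ℕ} (h : M = N * k) (hk : 0 < k) (g : Fin N → ℝ) :
    ∑ r : Fin N, g r = (k : ℝ)⁻¹ * ∑ s : Fin M, g (fdiv N k h s) := by
  rw [sum_fdiv h hk g, inv_mul_cancel_left₀ (by exact_mod_cast hk.ne')]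

lemma mkron_J_apply {m n k : ℕ} (A : Matrix (Fin m) (Fin n) ℝ) (i : Fin (m * k)) (j : Fin (n * k)) :
    mkron A (Jmat k) i j = A (fdiv m k rfl i) (fdiv n k rfl j) * (k : ℝ)⁻¹ := by
  have h1 : ((finProdFinEquiv.symm i).1 : Fin m) = fdiv m k rfl i := by
    apply Fin.ext; simp [Fin.coe_divNat]
  have h2 : ((finProdFinEquiv.symm j).1 : Fin n) = fdiv n k rfl j := by
    apply Fin.ext; simp [Fin.coe_divNat]
  have he : mkron A (Jmat k) i j =
      A (finProdFinEquiv.symm i).1 (finProdFinEquiv.symm j).1 * (k : ℝ)⁻¹ := rfl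
  rw [he, h1, h2]

lemma sstp_apply {m n p q t a b : ℕ}
    (ht : Nat.lcm n p = t) (ha : Nat.lcm n p / n = a) (hb : Nat.lcm n p / p = b)
    (e2 : t = n * a) (e3 : t = p * b)
    (A : Matrix (Fin m) (Fin n) ℝ) (B : Matrix (Fin p) (Fin q) ℝ)
    (i : Fin (m * (Nat.lcm n p / n))) (j : Fin (q * (Nat.lcm n p / p))) :
    sstp A B i j = (a : ℝ)⁻¹ * (b : ℝ)⁻¹ * ∑ s : Fin t,
      A (fdiv m a (by rw [ha]) i) (fdiv n a e2 s) *
      B (fdiv p b e3 s) (fdiv q b (by rw [hb]) j) := by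
  subst ht; subst ha; subst hb
  have hd : n * (Nat.lcm n p / n) = p * (Nat.lcm n p / p) := by rw [← e2, ← e3]
  unfold sstp
  rw [dif_pos hd, Matrix.mul_apply, ← sum_cast e2]
  rw [Finset.mul_sum]
  refine Finset.sum_congr rfl fun s _ => ?_
  rw [Matrix.submatrix_apply, mkron_J_apply, mkron_J_apply]
  have c1 : fdiv n (Nat.lcm n p / n) rfl (Fin.cast e2 s) =
      fdiv n (Nat.lcm n p / n) e2 s := rfl
  have c2 : fdiv p (Nat.lcm n p / p) rfl (Fin.cast hd (Fin.cast e2 s)) =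
      fdiv p (Nat.lcm n p / p) e3 s := rfl
  rw [c1, c2, id_eq]
  ring

lemma heq_ext {a b a' b' : ℕ} (h1 : a = a') (h2 : b = b')
    {M : Matrix (Fin a) (Fin b) ℝ} {N : Matrix (Fin a') (Fin b') ℝ}
    (h : ∀ i j, M i j = N (Fin.cast h1 i) (Fin.cast h2 j)) : HEq M N := by
  subst h1; subst h2
  rw [heq_iff_eq]
  ext i j
  exact h i j

/-- the second semi-tensor product is associative. -/
theorem sstp_assoc (m n p q u v : ℕ)
    (hm : 0 < m) (hn : 0 < n) (hp : 0 < p) (hq : 0 < q) (hu : 0 < u) (hv : 0 < v)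
    (A : Matrix (Fin m) (Fin n) ℝ) (B : Matrix (Fin p) (Fin q) ℝ)
    (C : Matrix (Fin u) (Fin v) ℝ) :
    HEq (sstp (sstp A B) C) (sstp A (sstp B C)) := by
  have pos_right : ∀ {x y z : ℕ}, z = x * y → 0 < z → 0 < y := by
    intro x y z h hz
    rcases Nat.eq_zero_or_pos y with h0 | h0
    · subst h0; rw [Nat.mul_zero] at h; omega
    · exact h0
  set t1 := Nat.lcm n p with ht1
  set a1 := t1 / n with ha1
  set b1 := t1 / p with hb1
  set t2 := Nat.lcm (q * b1) u with ht2
  set a2 := t2 / (q * b1) with ha2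
  set b2 := t2 / u with hb2
  set t := Nat.lcm q u with ht
  set c := t / q with hc
  set e := t / u with he
  set T := Nat.lcm n (p * c) with hT
  set a' := T / n with ha'
  set d := T / (p * c) with hd
  -- basic equations
  have g1 : t1 = n * a1 := by
    rw [ha1, ht1, Nat.mul_div_cancel' (Nat.dvd_lcm_left n p)]
  have g2 : t1 = p * b1 := by
    rw [hb1, ht1, Nat.mul_div_cancel' (Nat.dvd_lcm_right n p)]
  have g3 : t2 = (q * b1) * a2 := by
    rw [ha2, ht2, Nat.mul_div_cancel' (Nat.dvd_lcm_left (q * b1) u)]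
  have g4 : t2 = u * b2 := by
    rw [hb2, ht2, Nat.mul_div_cancel' (Nat.dvd_lcm_right (q * b1) u)]
  have g5 : t = q * c := by
    rw [hc, ht, Nat.mul_div_cancel' (Nat.dvd_lcm_left q u)]
  have g6 : t = u * e := by
    rw [he, ht, Nat.mul_div_cancel' (Nat.dvd_lcm_right q u)]
  have g7 : T = n * a' := by
    rw [ha', hT, Nat.mul_div_cancel' (Nat.dvd_lcm_left n (p * c))]
  have g8 : T = (p * c) * d := by
    rw [hd, hT, Nat.mul_div_cancel' (Nat.dvd_lcm_right n (p * c))]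
  -- positivity
  have ht1p : 0 < t1 := by rw [ht1]; exact Nat.lcm_pos hn hp
  have ha1p : 0 < a1 := pos_right g1 ht1p
  have hb1p : 0 < b1 := pos_right g2 ht1p
  have hQp : 0 < q * b1 := Nat.mul_pos hq hb1p
  have ht2p : 0 < t2 := by rw [ht2]; exact Nat.lcm_pos hQp hu
  have ha2p : 0 < a2 := pos_right g3 ht2p
  have hb2p : 0 < b2 := pos_right g4 ht2p
  have htp : 0 < t := by rw [ht]; exact Nat.lcm_pos hq hu
  have hcp : 0 < c := pos_right g5 htp
  have hep : 0 < e := pos_right g6 htp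
  have hPp : 0 < p * c := Nat.mul_pos hp hcp
  have hTp : 0 < T := by rw [hT]; exact Nat.lcm_pos hn hPp
  have ha'p : 0 < a' := pos_right g7 hTp
  have hdp : 0 < d := pos_right g8 hTp
  -- key lcm identity
  have hpt2 : p * t2 = q * T := by
    calc p * t2 = Nat.lcm (p * (q * b1)) (p * u) := by rw [ht2, Nat.lcm_mul_left]
      _ = Nat.lcm (q * t1) (p * u) := by
            rw [show p * (q * b1) = q * (p * b1) from by ring, ← g2]
      _ = Nat.lcm (Nat.lcm (q * n) (q * p)) (p * u) := by
            rw [ht1, ← Nat.lcm_mul_left]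
      _ = Nat.lcm (q * n) (Nat.lcm (q * p) (p * u)) := Nat.lcm_assoc _ _ _
      _ = Nat.lcm (q * n) (p * t) := by
            rw [show q * p = p * q from mul_comm q p, Nat.lcm_mul_left, ← ht]
      _ = Nat.lcm (q * n) (q * (p * c)) := by
            rw [g5, show p * (q * c) = q * (p * c) from by ring]
      _ = q * Nat.lcm n (p * c) := Nat.lcm_mul_left _ _ _
      _ = q * T := by rw [← hT]
  have K1 : t1 * a2 = T := by
    refine Nat.eq_of_mul_eq_mul_left hq ?_
    calc q * (t1 * a2) = p * ((q * b1) * a2) := by rw [g2]; ring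
      _ = p * t2 := by rw [← g3]
      _ = q * T := hpt2
  have K2 : t2 = t * d := by
    refine Nat.eq_of_mul_eq_mul_left hPp ?_
    calc (p * c) * t2 = c * (p * t2) := by ring
      _ = c * (q * T) := by rw [hpt2]
      _ = t * T := by rw [g5]; ring
      _ = (p * c) * (t * d) := by rw [g8]; ring
  have K3 : b1 * a2 = c * d := by
    refine Nat.eq_of_mul_eq_mul_left hq ?_
    calc q * (b1 * a2) = (q * b1) * a2 := by ring
      _ = t2 := g3.symm
      _ = t * d := K2
      _ = q * (c * d) := by rw [g5]; ring
  have K4 : a1 * a2 = a' := by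
    refine Nat.eq_of_mul_eq_mul_left hn ?_
    calc n * (a1 * a2) = (n * a1) * a2 := by ring
      _ = t1 * a2 := by rw [← g1]
      _ = T := K1
      _ = n * a' := g7
  have K5 : b2 = e * d := by
    refine Nat.eq_of_mul_eq_mul_left hu ?_
    calc u * b2 = t2 := g4.symm
      _ = t * d := K2
      _ = u * (e * d) := by rw [g6]; ring
  have hr : m * a1 * a2 = m * a' := by rw [← K4]; ring
  have hc2 : v * b2 = v * e * d := by rw [K5]; ring
  refine heq_ext hr hc2 ?_
  intro i j
  -- expand LHS
  have W1 : Nat.lcm (q * b1) u = t2 := ht2.symm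
  have Wa1 : Nat.lcm (q * b1) u / (q * b1) = a2 := by rw [← ht2, ← ha2]
  have Wb1 : Nat.lcm (q * b1) u / u = b2 := by rw [← ht2, ← hb2]
  have V1 : Nat.lcm n p = t1 := ht1.symm
  have Va1 : Nat.lcm n p / n = a1 := by rw [← ht1, ← ha1]
  have Vb1 : Nat.lcm n p / p = b1 := by rw [← ht1, ← hb1]
  have U1 : Nat.lcm q u = t := ht.symm
  have Ua1 : Nat.lcm q u / q = c := by rw [← ht, ← hc]
  have Ub1 : Nat.lcm q u / u = e := by rw [← ht, ← he]
  have S1 : Nat.lcm n (p * c) = T := hT.symm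
  have Sa1 : Nat.lcm n (p * c) / n = a' := by rw [← hT, ← ha']
  have Sb1 : Nat.lcm n (p * c) / (p * c) = d := by rw [← hT, ← hd]
  rw [sstp_apply W1 Wa1 Wb1 g3 g4 (sstp A B) C i j]
  simp only [sstp_apply V1 Va1 Vb1 g1 g2 A B]
  simp only [fdiv_fdiv]
  simp only [sum_scale K1.symm ha2p]
  simp only [fdiv_fdiv]
  -- expand RHS
  rw [sstp_apply S1 Sa1 Sb1 g7 g8 A (sstp B C) (Fin.cast hr i) (Fin.cast hc2 j)]
  simp only [sstp_apply U1 Ua1 Ub1 g5 g6 B C]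
  simp only [fdiv_fdiv]
  simp only [sum_scale K2 hdp]
  simp only [fdiv_fdiv]
  -- distribute and swap sums
  simp only [Finset.mul_sum, Finset.sum_mul]
  rw [Finset.sum_comm]
  refine Finset.sum_congr rfl fun s' _ => Finset.sum_congr rfl fun s _ => ?_
  -- identify indices
  have E1 : fdiv m (a1 * a2) (show m * a1 * a2 = m * (a1 * a2) from by ring) i =
      fdiv m a' (show m * a' = m * a' from rfl) (Fin.cast hr i) := by
    apply Fin.ext; simp [K4]
  have E2 : fdiv n (a1 * a2) (show T = n * (a1 * a2) from by rw [K4]; exact g7) s' =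
      fdiv n a' g7 s' := by
    apply Fin.ext; simp [K4]
  have E3 : fdiv p (b1 * a2) (show T = p * (b1 * a2) from by rw [K3, g8, Nat.mul_assoc]) s' =
      fdiv p (c * d) (show T = p * (c * d) from by rw [g8, Nat.mul_assoc]) s' := by
    apply Fin.ext; simp [K3]
  have E4 : fdiv q (b1 * a2) (show t2 = q * (b1 * a2) from by rw [g3, Nat.mul_assoc]) s =
      fdiv q (c * d) (show t2 = q * (c * d) from by rw [K2, g5, Nat.mul_assoc]) s := by
    apply Fin.ext; simp [K3]
  have E5 : fdiv u b2 g4 s =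
      fdiv u (e * d) (show t2 = u * (e * d) from by rw [K2, g6, Nat.mul_assoc]) s := by
    apply Fin.ext; simp [K5]
  have E6 : fdiv v b2 (show v * b2 = v * b2 from rfl) j =
      fdiv v (e * d) (show v * e * d = v * (e * d) from by ring) (Fin.cast hc2 j) := by
    apply Fin.ext; simp [K5]
  rw [fdiv_fdiv (h2 := g3) (s := s), fdiv_fdiv (h2 := g8) (s := s'), E1, E2, E3, E4, E5, E6]
  -- coefficients
  have N0 : a1 * b1 * a2 * a2 * b2 = a' * c * e * d * d := by
    calc a1 * b1 * a2 * a2 * b2 = (a1 * a2) * ((b1 * a2) * b2) := by ring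
      _ = a' * ((c * d) * (e * d)) := by rw [K4, K3, K5]
      _ = a' * c * e * d * d := by ring
  have NR : ((a1 : ℝ)) * b1 * a2 * a2 * b2 = (a' : ℝ) * c * e * d * d := by
    exact_mod_cast congrArg (Nat.cast : ℕ → ℝ) N0
  have hInv : ((a1 : ℝ) * b1 * a2 * a2 * b2)⁻¹ = ((a' : ℝ) * c * e * d * d)⁻¹ := by
    rw [NR]
  linear_combination (A (fdiv m a' (show m * a' = m * a' from rfl) (Fin.cast hr i))
      (fdiv n a' g7 s') *
    B (fdiv p (c * d) (show T = p * (c * d) from by rw [g8, Nat.mul_assoc]) s')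
      (fdiv q (c * d) (show t2 = q * (c * d) from by rw [K2, g5, Nat.mul_assoc]) s) *
    C (fdiv u (e * d) (show t2 = u * (e * d) from by rw [K2, g6, Nat.mul_assoc]) s)
      (fdiv v (e * d) (show v * e * d = v * (e * d) from by ring) (Fin.cast hc2 j))) * hInv
end
end

section
/- The second semi-tensor product is well-defined on matrix equivalence classes: if A ≈ A' and B ≈ B' (i.e., A ⊗ J_α = A' ⊗ J_{α'} and B ⊗ J_β = B' ⊗ J_{β'} for some indices), then A ∘ B ≈ A' ∘ B'. -/
open Matrix

noncomputable section

/-- Mixed-dimensional matrices. -/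
def MMat := Σ m n : ℕ, Matrix (Fin m) (Fin n) ℝ

/-- Matrix equivalence: `A ≈ B` iff `A ⊗ J_α = B ⊗ J_β` for some `α, β ≥ 1`. -/
def mequiv (A B : MMat) : Prop :=
  ∃ α β : ℕ, 0 < α ∧ 0 < β ∧
    ∃ (h1 : A.1 * α = B.1 * β) (h2 : A.2.1 * α = B.2.1 * β),
      ∀ i j, mkron A.2.2 (Jmat α) i j = mkron B.2.2 (Jmat β) (Fin.cast h1 i) (Fin.cast h2 j)

/-- total entry function -/
def ent {m n : ℕ} (A : Matrix (Fin m) (Fin n) ℝ) (i j : ℕ) : ℝ :=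
  if h : i < m ∧ j < n then A ⟨i, h.1⟩ ⟨j, h.2⟩ else 0

/-- entry function of `A ⊗ J_d` extended to all of ℕ × ℕ -/
def entJ {m n : ℕ} (A : Matrix (Fin m) (Fin n) ℝ) (d i j : ℕ) : ℝ :=
  ent A (i / d) (j / d) * (d : ℝ)⁻¹

lemma mkronJ {m n k : ℕ} (A : Matrix (Fin m) (Fin n) ℝ) (i : Fin (m * k)) (j : Fin (n * k)) :
    mkron A (Jmat k) i j = entJ A k i.1 j.1 := by
  have h1 : (i : ℕ) / k < m := by have := i.divNat.isLt; rwa [Fin.coe_divNat] at this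
  have h2 : (j : ℕ) / k < n := by have := j.divNat.isLt; rwa [Fin.coe_divNat] at this
  simp only [mkron, Jmat, Matrix.of_apply, finProdFinEquiv_symm_apply, entJ, ent,
    dif_pos (And.intro h1 h2)]
  have e1 : i.divNat = ⟨(i : ℕ) / k, h1⟩ := Fin.ext (Fin.coe_divNat _)
  have e2 : j.divNat = ⟨(j : ℕ) / k, h2⟩ := Fin.ext (Fin.coe_divNat _)
  rw [e1, e2]

lemma entJ_scale {m n : ℕ} (A : Matrix (Fin m) (Fin n) ℝ) (d u x y : ℕ) :
    entJ A (d * u) x y = entJ A d (x / u) (y / u) * (u : ℝ)⁻¹ := by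
  unfold entJ
  rw [Nat.div_div_eq_div_mul, Nat.div_div_eq_div_mul, mul_comm u d]
  push_cast
  rw [mul_inv]
  ring

lemma ent_zero_left {m n : ℕ} (A : Matrix (Fin m) (Fin n) ℝ) {i : ℕ} (j : ℕ) (h : ¬ i < m) :
    ent A i j = 0 := by
  rw [ent, dif_neg]; tauto

lemma ent_zero_right {m n : ℕ} (A : Matrix (Fin m) (Fin n) ℝ) (i : ℕ) {j : ℕ} (h : ¬ j < n) :
    ent A i j = 0 := by
  rw [ent, dif_neg]; tauto

lemma sum_div_grp (γ : ℕ) (g : ℕ → ℝ) (t : ℕ) :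
    ∑ k ∈ Finset.range (γ * t), g (k / γ) = γ * ∑ r ∈ Finset.range t, g r := by
  induction t with
  | zero => simp
  | succ t ih =>
    have key : ∑ k ∈ Finset.Ico (γ * t) (γ * t + γ), g (k / γ) = γ * g t := by
      rw [Finset.sum_congr rfl (g := fun _ => g t) (fun k hk => by
        rw [Finset.mem_Ico] at hk
        congr 1
        exact Nat.div_eq_of_lt_le (by rw [mul_comm]; exact hk.1)
          (by rw [add_mul, one_mul, mul_comm]; exact hk.2)),
        Finset.sum_const, Nat.card_Ico, Nat.add_sub_cancel_left, nsmul_eq_mul]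
    rw [Finset.sum_range_succ, Nat.mul_succ, Finset.range_eq_Ico,
      ← Finset.sum_Ico_consecutive _ (Nat.zero_le (γ * t)) (Nat.le_add_right _ _),
      ← Finset.range_eq_Ico, ih, key]
    ring

lemma sstp_kronJ {m n p q : ℕ} (hn : 0 < n) (hp : 0 < p)
    (A : Matrix (Fin m) (Fin n) ℝ) (B : Matrix (Fin p) (Fin q) ℝ) (γ : ℕ) (hγ : 0 < γ)
    (i : Fin (m * (Nat.lcm n p / n) * γ)) (j : Fin (q * (Nat.lcm n p / p) * γ)) :
    mkron (sstp A B) (Jmat γ) i j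
      = ∑ k ∈ Finset.range (γ * Nat.lcm n p),
          entJ A (γ * Nat.lcm n p / n) i.1 k * entJ B (γ * Nat.lcm n p / p) k j.1 := by
  have hnt : n ∣ Nat.lcm n p := Nat.dvd_lcm_left _ _
  have hpt : p ∣ Nat.lcm n p := Nat.dvd_lcm_right _ _
  have ha : n * (Nat.lcm n p / n) = Nat.lcm n p := Nat.mul_div_cancel' hnt
  have hb : p * (Nat.lcm n p / p) = Nat.lcm n p := Nat.mul_div_cancel' hpt
  have hcast : n * (Nat.lcm n p / n) = p * (Nat.lcm n p / p) := by rw [ha, hb]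
  have hKn : γ * Nat.lcm n p / n = Nat.lcm n p / n * γ := by
    rw [Nat.mul_div_assoc _ hnt, mul_comm]
  have hKp : γ * Nat.lcm n p / p = Nat.lcm n p / p * γ := by
    rw [Nat.mul_div_assoc _ hpt, mul_comm]
  have hi : (i : ℕ) / γ < m * (Nat.lcm n p / n) := (Nat.div_lt_iff_lt_mul hγ).2 i.isLt
  have hj : (j : ℕ) / γ < q * (Nat.lcm n p / p) := (Nat.div_lt_iff_lt_mul hγ).2 j.isLt
  have hγR : (γ : ℝ) ≠ 0 := Nat.cast_ne_zero.2 hγ.ne'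
  rw [mkronJ]
  -- RHS transformation
  have rhs : ∑ k ∈ Finset.range (γ * Nat.lcm n p),
      entJ A (γ * Nat.lcm n p / n) i.1 k * entJ B (γ * Nat.lcm n p / p) k j.1
      = (∑ r ∈ Finset.range (Nat.lcm n p),
          entJ A (Nat.lcm n p / n) ((i : ℕ) / γ) r * entJ B (Nat.lcm n p / p) r ((j : ℕ) / γ))
          * (γ : ℝ)⁻¹ := by
    have step : ∀ k, entJ A (γ * Nat.lcm n p / n) i.1 k * entJ B (γ * Nat.lcm n p / p) k j.1
        = (entJ A (Nat.lcm n p / n) ((i : ℕ) / γ) (k / γ) *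
            entJ B (Nat.lcm n p / p) (k / γ) ((j : ℕ) / γ))
            * ((γ : ℝ)⁻¹ * (γ : ℝ)⁻¹) := by
      intro k
      rw [hKn, hKp, entJ_scale, entJ_scale]
      ring
    rw [Finset.sum_congr rfl (fun k _ => step k), ← Finset.sum_mul,
      sum_div_grp γ (fun r => entJ A (Nat.lcm n p / n) ((i : ℕ) / γ) r *
        entJ B (Nat.lcm n p / p) r ((j : ℕ) / γ)) (Nat.lcm n p)]
    field_simp
  rw [rhs]
  -- LHS
  rw [entJ, ent, dif_pos (And.intro hi hj)]
  congr 1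
  rw [sstp, dif_pos hcast, Matrix.mul_apply]
  have term : ∀ k : Fin (n * (Nat.lcm n p / n)),
      mkron A (Jmat (Nat.lcm n p / n)) ⟨(i : ℕ) / γ, hi⟩ k *
        (mkron B (Jmat (Nat.lcm n p / p))).submatrix (Fin.cast hcast) id k ⟨(j : ℕ) / γ, hj⟩
      = entJ A (Nat.lcm n p / n) ((i : ℕ) / γ) k.1 *
          entJ B (Nat.lcm n p / p) k.1 ((j : ℕ) / γ) := by
    intro k
    rw [Matrix.submatrix_apply, mkronJ, mkronJ]
    rfl
  rw [Finset.sum_congr rfl (fun k _ => term k)]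
  rw [Fin.sum_univ_eq_sum_range (fun k => entJ A (Nat.lcm n p / n) ((i : ℕ) / γ) k *
    entJ B (Nat.lcm n p / p) k ((j : ℕ) / γ)), ha]

lemma entJ_equiv {m n m' n' α α' : ℕ} (hα : 0 < α) (hα' : 0 < α')
    (A : Matrix (Fin m) (Fin n) ℝ) (A' : Matrix (Fin m') (Fin n') ℝ)
    (h1 : m * α = m' * α') (h2 : n * α = n' * α')
    (hAe : ∀ (i : Fin (m * α)) (j : Fin (n * α)),
      mkron A (Jmat α) i j = mkron A' (Jmat α') (Fin.cast h1 i) (Fin.cast h2 j)) :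
    ∀ x y, entJ A α x y = entJ A' α' x y := by
  intro x y
  by_cases hx : x < m * α
  · by_cases hy : y < n * α
    · have := hAe ⟨x, hx⟩ ⟨y, hy⟩
      rw [mkronJ, mkronJ] at this
      exact this
    · have hy' : ¬ y < n' * α' := by rwa [← h2]
      rw [entJ, entJ,
        ent_zero_right _ _ (fun c => hy ((Nat.div_lt_iff_lt_mul hα).1 c)),
        ent_zero_right _ _ (fun c => hy' ((Nat.div_lt_iff_lt_mul hα').1 c)),
        zero_mul, zero_mul]
  · have hx' : ¬ x < m' * α' := by rwa [← h1]
    rw [entJ, entJ,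
      ent_zero_left _ _ (fun c => hx ((Nat.div_lt_iff_lt_mul hα).1 c)),
      ent_zero_left _ _ (fun c => hx' ((Nat.div_lt_iff_lt_mul hα').1 c)),
      zero_mul, zero_mul]

/-- the second semi-tensor product is well defined on matrix
equivalence classes: `A ≈ A'` and `B ≈ B'` imply `A ∘ B ≈ A' ∘ B'`. -/
theorem sstp_well_defined (m n p q m' n' p' q' : ℕ)
    (hm : 0 < m) (hn : 0 < n) (hp : 0 < p) (hq : 0 < q)
    (hm' : 0 < m') (hn' : 0 < n') (hp' : 0 < p') (hq' : 0 < q')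
    (A : Matrix (Fin m) (Fin n) ℝ) (B : Matrix (Fin p) (Fin q) ℝ)
    (A' : Matrix (Fin m') (Fin n') ℝ) (B' : Matrix (Fin p') (Fin q') ℝ)
    (hA : mequiv ⟨m, n, A⟩ ⟨m', n', A'⟩) (hB : mequiv ⟨p, q, B⟩ ⟨p', q', B'⟩) :
    mequiv ⟨m * (Nat.lcm n p / n), q * (Nat.lcm n p / p), sstp A B⟩
           ⟨m' * (Nat.lcm n' p' / n'), q' * (Nat.lcm n' p' / p'), sstp A' B'⟩ := by
  obtain ⟨α, α', hα, hα', hα1, hα2, hAe⟩ := hA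
  obtain ⟨β, β', hβ, hβ', hβ1, hβ2, hBe⟩ := hB
  simp only at hα1 hα2 hβ1 hβ2 hAe hBe
  have ht : 0 < Nat.lcm n p := Nat.lcm_pos hn hp
  have ht' : 0 < Nat.lcm n' p' := Nat.lcm_pos hn' hp'
  have hnt : n ∣ Nat.lcm n p := Nat.dvd_lcm_left _ _
  have hpt : p ∣ Nat.lcm n p := Nat.dvd_lcm_right _ _
  have hnt' : n' ∣ Nat.lcm n' p' := Nat.dvd_lcm_left _ _
  have hpt' : p' ∣ Nat.lcm n' p' := Nat.dvd_lcm_right _ _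
  set t := Nat.lcm n p with htdef
  set t' := Nat.lcm n' p' with ht'def
  have hγ : 0 < t' * (n * α) * (p * β) := by positivity
  have hγ' : 0 < t * (n * α) * (p * β) := by positivity
  have c1 : t / n * n = t := Nat.div_mul_cancel hnt
  have c1' : t' / n' * n' = t' := Nat.div_mul_cancel hnt'
  have c2 : t / p * p = t := Nat.div_mul_cancel hpt
  have c2' : t' / p' * p' = t' := Nat.div_mul_cancel hpt'
  have h1 : m * (t / n) * (t' * (n * α) * (p * β))
      = m' * (t' / n') * (t * (n * α) * (p * β)) := by
    calc m * (t / n) * (t' * (n * α) * (p * β))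
        = (m * α) * (t / n * n) * (t' * (p * β)) := by ring
      _ = (m' * α') * (t' / n' * n') * (t * (p * β)) := by rw [c1, c1', hα1]; ring
      _ = m' * (t' / n') * (t * (n' * α') * (p * β)) := by ring
      _ = m' * (t' / n') * (t * (n * α) * (p * β)) := by rw [hα2]
  have h2 : q * (t / p) * (t' * (n * α) * (p * β))
      = q' * (t' / p') * (t * (n * α) * (p * β)) := by
    calc q * (t / p) * (t' * (n * α) * (p * β))
        = (q * β) * (t / p * p) * (t' * (n * α)) := by ring
      _ = (q' * β') * (t' / p' * p') * (t * (n * α)) := by rw [c2, c2', hβ2]; ring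
      _ = q' * (t' / p') * (t * (n * α) * (p' * β')) := by ring
      _ = q' * (t' / p') * (t * (n * α) * (p * β)) := by rw [hβ1]
  refine ⟨t' * (n * α) * (p * β), t * (n * α) * (p * β), hγ, hγ', h1, h2, ?_⟩
  intro i j
  rw [sstp_kronJ hn hp A B _ hγ i j,
    sstp_kronJ hn' hp' A' B' _ hγ' (Fin.cast h1 i) (Fin.cast h2 j)]
  simp only [Fin.coe_cast]
  have hKK : t * (n * α) * (p * β) * t' = t' * (n * α) * (p * β) * t := by ring
  rw [hKK]
  -- divisions
  have eKn : t' * (n * α) * (p * β) * t / n = α * (t * t' * (p * β)) := by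
    rw [show t' * (n * α) * (p * β) * t = n * (α * (t * t' * (p * β))) from by ring,
      Nat.mul_div_cancel_left _ hn]
  have eKn' : t' * (n * α) * (p * β) * t / n' = α' * (t * t' * (p * β)) := by
    rw [show t' * (n * α) * (p * β) * t = n' * (α' * (t * t' * (p * β))) from by
        rw [show t' * (n * α) * (p * β) * t = (n * α) * (t * t' * (p * β)) from by ring, hα2]
        ring,
      Nat.mul_div_cancel_left _ hn']
  have eKp : t' * (n * α) * (p * β) * t / p = β * (t * t' * (n * α)) := by
    rw [show t' * (n * α) * (p * β) * t = p * (β * (t * t' * (n * α))) from by ring,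
      Nat.mul_div_cancel_left _ hp]
  have eKp' : t' * (n * α) * (p * β) * t / p' = β' * (t * t' * (n * α)) := by
    rw [show t' * (n * α) * (p * β) * t = p' * (β' * (t * t' * (n * α))) from by
        rw [show t' * (n * α) * (p * β) * t = (p * β) * (t * t' * (n * α)) from by ring, hβ1]
        ring,
      Nat.mul_div_cancel_left _ hp']
  refine Finset.sum_congr rfl fun k _ => ?_
  rw [eKn, eKn', eKp, eKp', entJ_scale, entJ_scale, entJ_scale, entJ_scale,
    entJ_equiv hα hα' A A' hα1 hα2 hAe, entJ_equiv hβ hβ' B B' hβ1 hβ2 hBe]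
end
end

section
/- The matrix-vector action is well-defined on equivalence classes: if A ∈ ℝ^{m×n}, x ∈ ℝ^r, x' = x ⊗ 1_s, and A ⃗∘ y := (A ⊗ J_{t/n})(y ⊗ 1_{t/r}) with t = lcm(n, dim y), then (A ⃗∘ x) ↔ (A ⃗∘ x'). -/
open Matrix

noncomputable section

/-- The action `A ⃗∘ y := (A ⊗ J_{t/n})(y ⊗ 1_{t/r})`, `t = lcm(n, r)`. -/
def maction {m n r : ℕ} (A : Matrix (Fin m) (Fin n) ℝ) (y : Fin r → ℝ) :
    Fin (m * (Nat.lcm n r / n)) → ℝ :=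
  if h : n * (Nat.lcm n r / n) = r * (Nat.lcm n r / r) then
    (mkron A (Jmat (Nat.lcm n r / n))).mulVec
      (fun j => vkron y (ones (Nat.lcm n r / r)) (Fin.cast h j))
  else 0

lemma vkron_ones_apply_s12 {m k : ℕ} (x : Fin m → ℝ) (i : Fin (m * k)) :
    vkron x (ones k) i = x i.divNat := by
  simp [vkron, ones, finProdFinEquiv]

lemma sum_div_scale (t d : ℕ) (F : ℕ → ℝ) :
    ∑ j : Fin (t * d), F ((j : ℕ) / d) = d * ∑ j : Fin t, F (j : ℕ) := by
  rcases Nat.eq_zero_or_pos d with hd | hd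
  · subst hd; simp
  rw [← finProdFinEquiv.sum_comp (fun j : Fin (t * d) => F ((j : ℕ) / d))]
  have h : ∀ ab : Fin t × Fin d, F ((finProdFinEquiv ab : ℕ) / d) = F ab.1 := by
    rintro ⟨a, b⟩
    congr 1
    simp only [finProdFinEquiv_apply_val]
    rw [Nat.add_mul_div_left _ _ hd, Nat.div_eq_of_lt b.2, Nat.zero_add]
  rw [Fintype.sum_congr _ _ h, Fintype.sum_prod_type]
  rw [Finset.mul_sum]
  simp [mul_comm]

lemma sum_eq_aux {m n r s : ℕ} (hn : 0 < n) (hr : 0 < r) (hs : 0 < s)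
    (A : Matrix (Fin m) (Fin n) ℝ) (x : Fin r → ℝ)
    (t t' p q p' q' d : ℕ)
    (hnp : n * p = t) (hrq : r * q = t) (hrsq' : r * s * q' = t')
    (htd : t * d = t') (hpd : p * d = p') (hqd : q * d = q' * s)
    (hppos : 0 < p) (hdpos : 0 < d) (hq'pos : 0 < q') (u : Fin m) :
    ((p : ℕ) : ℝ)⁻¹ * ∑ j : Fin t,
        A u ⟨(j : ℕ) / p % n, Nat.mod_lt _ hn⟩ * x ⟨(j : ℕ) / q % r, Nat.mod_lt _ hr⟩
    = ((p' : ℕ) : ℝ)⁻¹ * ∑ j : Fin t',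
        A u ⟨(j : ℕ) / p' % n, Nat.mod_lt _ hn⟩ *
        vkron x (ones s) ⟨(j : ℕ) / q' % (r * s), Nat.mod_lt _ (Nat.mul_pos hr hs)⟩ := by
  have hqdpos : 0 < q * d := by rw [hqd]; exact Nat.mul_pos hq'pos hs
  set F : ℕ → ℝ := fun j =>
    A u ⟨j / p % n, Nat.mod_lt _ hn⟩ * x ⟨j / q % r, Nat.mod_lt _ hr⟩ with hF
  have claim2 : ∀ j : Fin t',
      A u ⟨(j : ℕ) / p' % n, Nat.mod_lt _ hn⟩ *
        vkron x (ones s) ⟨(j : ℕ) / q' % (r * s), Nat.mod_lt _ (Nat.mul_pos hr hs)⟩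
      = F ((j : ℕ) / d) := by
    intro j
    have hjq' : (j : ℕ) / q' < r * s := by
      apply (Nat.div_lt_iff_lt_mul hq'pos).2
      rw [hrsq']; exact j.2
    have hjqd : (j : ℕ) / (q * d) < r := by
      apply (Nat.div_lt_iff_lt_mul hqdpos).2
      rw [← mul_assoc, hrq, htd]; exact j.2
    rw [vkron_ones_apply_s12]
    simp only [hF]
    congr 1
    · congr 1
      ext
      simp only [Nat.div_div_eq_div_mul]
      rw [mul_comm d p, hpd]
    · congr 1
      ext
      simp only [Fin.coe_divNat]
      rw [Nat.mod_eq_of_lt hjq', Nat.div_div_eq_div_mul, Nat.div_div_eq_div_mul,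
        ← hqd, mul_comm d q, Nat.mod_eq_of_lt hjqd]
  rw [Fintype.sum_congr _ _ claim2]
  have reidx : ∑ j : Fin t', F ((j : ℕ) / d)
      = ∑ j : Fin (t * d), F ((j : ℕ) / d) := by
    apply Fintype.sum_equiv (finCongr htd.symm)
    intro j
    rfl
  rw [reidx, sum_div_scale]
  rw [← hpd]
  have hp0 : ((p : ℕ) : ℝ) ≠ 0 := Nat.cast_ne_zero.2 hppos.ne'
  have hd0 : ((d : ℕ) : ℝ) ≠ 0 := Nat.cast_ne_zero.2 hdpos.ne'
  push_cast
  field_simp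
  ring

lemma maction_apply {m n r : ℕ} (hm : 0 < m) (hn : 0 < n) (hr : 0 < r)
    (A : Matrix (Fin m) (Fin n) ℝ) (x : Fin r → ℝ)
    (i : Fin (m * (Nat.lcm n r / n))) :
    maction A x i = ((Nat.lcm n r / n : ℕ) : ℝ)⁻¹ *
      ∑ j : Fin (Nat.lcm n r),
        A ⟨(i : ℕ) / (Nat.lcm n r / n) % m, Nat.mod_lt _ hm⟩
          ⟨(j : ℕ) / (Nat.lcm n r / n) % n, Nat.mod_lt _ hn⟩ *
        x ⟨(j : ℕ) / (Nat.lcm n r / r) % r, Nat.mod_lt _ hr⟩ := by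
  have htpos : 0 < Nat.lcm n r := Nat.pos_of_ne_zero (Nat.lcm_ne_zero hn.ne' hr.ne')
  have hnt : n ∣ Nat.lcm n r := Nat.dvd_lcm_left n r
  have hrt : r ∣ Nat.lcm n r := Nat.dvd_lcm_right n r
  have hnp : n * (Nat.lcm n r / n) = Nat.lcm n r := Nat.mul_div_cancel' hnt
  have hrq : r * (Nat.lcm n r / r) = Nat.lcm n r := Nat.mul_div_cancel' hrt
  have hppos : 0 < Nat.lcm n r / n := Nat.div_pos (Nat.le_of_dvd htpos hnt) hn
  have hqpos : 0 < Nat.lcm n r / r := Nat.div_pos (Nat.le_of_dvd htpos hrt) hr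
  have hc : n * (Nat.lcm n r / n) = r * (Nat.lcm n r / r) := by rw [hnp, hrq]
  rw [maction, dif_pos hc]
  rw [Matrix.mulVec, dotProduct, Finset.mul_sum]
  apply Fintype.sum_equiv (finCongr hnp)
  intro j
  have hjp : (j : ℕ) / (Nat.lcm n r / n) < n :=
    (Nat.div_lt_iff_lt_mul hppos).2 j.2
  have hjq : (j : ℕ) / (Nat.lcm n r / r) < r :=
    (Nat.div_lt_iff_lt_mul hqpos).2 (hc ▸ j.2)
  have hip : (i : ℕ) / (Nat.lcm n r / n) < m :=
    (Nat.div_lt_iff_lt_mul hppos).2 i.2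
  simp only [mkron, Jmat, vkron, ones, Matrix.of_apply, finProdFinEquiv_symm_apply,
    finCongr_apply, mul_one]
  have e1 : (i.divNat : Fin m) = ⟨(i : ℕ) / (Nat.lcm n r / n) % m, Nat.mod_lt _ hm⟩ := by
    ext; simp [Fin.coe_divNat, Nat.mod_eq_of_lt hip]
  have e2 : (j.divNat : Fin n) = ⟨(j : ℕ) / (Nat.lcm n r / n) % n, Nat.mod_lt _ hn⟩ := by
    ext; simp [Fin.coe_divNat, Nat.mod_eq_of_lt hjp]
  have e3 : ((Fin.cast hc j).divNat : Fin r)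
      = ⟨(j : ℕ) / (Nat.lcm n r / r) % r, Nat.mod_lt _ hr⟩ := by
    ext; simp [Fin.coe_divNat, Nat.mod_eq_of_lt hjq]
  rw [e1, e2, e3]
  have e4 : ((Fin.cast hnp j : Fin (Nat.lcm n r)) : ℕ) = (j : ℕ) := rfl
  simp only [finCongr_apply, Fin.coe_cast]
  ring

/-- the matrix-vector action is well defined on vector
equivalence classes: `(A ⃗∘ x) ↔ (A ⃗∘ (x ⊗ 1_s))`. -/
theorem maction_well_defined (m n r s : ℕ)
    (hm : 0 < m) (hn : 0 < n) (hr : 0 < r) (hs : 0 < s)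
    (A : Matrix (Fin m) (Fin n) ℝ) (x : Fin r → ℝ) :
    vequiv ⟨m * (Nat.lcm n r / n), maction A x⟩
           ⟨m * (Nat.lcm n (r * s) / n), maction A (vkron x (ones s))⟩ := by
  have hrs : 0 < r * s := Nat.mul_pos hr hs
  have htpos : 0 < Nat.lcm n r := Nat.pos_of_ne_zero (Nat.lcm_ne_zero hn.ne' hr.ne')
  have ht'pos : 0 < Nat.lcm n (r * s) :=
    Nat.pos_of_ne_zero (Nat.lcm_ne_zero hn.ne' hrs.ne')
  have hnt : n ∣ Nat.lcm n r := Nat.dvd_lcm_left n r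
  have hrt : r ∣ Nat.lcm n r := Nat.dvd_lcm_right n r
  have hnt' : n ∣ Nat.lcm n (r * s) := Nat.dvd_lcm_left n (r * s)
  have hrst' : r * s ∣ Nat.lcm n (r * s) := Nat.dvd_lcm_right n (r * s)
  have htt' : Nat.lcm n r ∣ Nat.lcm n (r * s) :=
    Nat.lcm_dvd hnt' ((dvd_mul_right r s).trans hrst')
  have hnp : n * (Nat.lcm n r / n) = Nat.lcm n r := Nat.mul_div_cancel' hnt
  have hrq : r * (Nat.lcm n r / r) = Nat.lcm n r := Nat.mul_div_cancel' hrt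
  have hnp' : n * (Nat.lcm n (r * s) / n) = Nat.lcm n (r * s) := Nat.mul_div_cancel' hnt'
  have hrsq' : r * s * (Nat.lcm n (r * s) / (r * s)) = Nat.lcm n (r * s) :=
    Nat.mul_div_cancel' hrst'
  have htd : Nat.lcm n r * (Nat.lcm n (r * s) / Nat.lcm n r) = Nat.lcm n (r * s) :=
    Nat.mul_div_cancel' htt'
  have hppos : 0 < Nat.lcm n r / n := Nat.div_pos (Nat.le_of_dvd htpos hnt) hn
  have hp'pos : 0 < Nat.lcm n (r * s) / n := Nat.div_pos (Nat.le_of_dvd ht'pos hnt') hn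
  have hq'pos : 0 < Nat.lcm n (r * s) / (r * s) :=
    Nat.div_pos (Nat.le_of_dvd ht'pos hrst') hrs
  have hdpos : 0 < Nat.lcm n (r * s) / Nat.lcm n r :=
    Nat.div_pos (Nat.le_of_dvd ht'pos htt') htpos
  have hpd : (Nat.lcm n r / n) * (Nat.lcm n (r * s) / Nat.lcm n r)
      = Nat.lcm n (r * s) / n := by
    apply Nat.eq_of_mul_eq_mul_left hn
    rw [← mul_assoc, hnp, htd, hnp']
  have hqd : (Nat.lcm n r / r) * (Nat.lcm n (r * s) / Nat.lcm n r)
      = (Nat.lcm n (r * s) / (r * s)) * s := by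
    apply Nat.eq_of_mul_eq_mul_left hr
    calc r * (Nat.lcm n r / r * (Nat.lcm n (r * s) / Nat.lcm n r))
        = (r * (Nat.lcm n r / r)) * (Nat.lcm n (r * s) / Nat.lcm n r) := by ring
      _ = Nat.lcm n (r * s) := by rw [hrq, htd]
      _ = r * s * (Nat.lcm n (r * s) / (r * s)) := hrsq'.symm
      _ = r * (Nat.lcm n (r * s) / (r * s) * s) := by ring
  refine ⟨Nat.lcm n (r * s) / n, Nat.lcm n r / n, hp'pos, hppos, by ring, fun i => ?_⟩
  dsimp only
  rw [vkron_ones_apply_s12, vkron_ones_apply_s12]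
  rw [maction_apply hm hn hr, maction_apply hm hn hrs]
  simp only [Fin.coe_divNat, Fin.coe_cast, Nat.div_div_eq_div_mul]
  have hu : (⟨(i : ℕ) / (Nat.lcm n (r * s) / n * (Nat.lcm n r / n)) % m,
        Nat.mod_lt _ hm⟩ : Fin m)
      = ⟨(i : ℕ) / (Nat.lcm n r / n * (Nat.lcm n (r * s) / n)) % m, Nat.mod_lt _ hm⟩ := by
    ext
    simp only []
    rw [mul_comm (Nat.lcm n (r * s) / n) (Nat.lcm n r / n)]
  rw [hu]
  exact sum_eq_aux hn hr hs A x (Nat.lcm n r) (Nat.lcm n (r * s)) (Nat.lcm n r / n)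
    (Nat.lcm n r / r) (Nat.lcm n (r * s) / n) (Nat.lcm n (r * s) / (r * s))
    (Nat.lcm n (r * s) / Nat.lcm n r) hnp hrq hrsq' htd hpd hqd hppos hdpos hq'pos _
end
end
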